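/- Let M be a type, let N ≥ 1, let L_0, L_1, …, L_{N-1} be finite nonempty subsets of M, let π : M → ℝ be nonnegative, and let P : M → M → ℝ be nonnegative. For a tuple l = (l_0, …, l_{j}) define its weight W_j(l) = π(l_0) · Π_{k=1}^{j} P(l_{k-1}, l_k). Define T : for m ∈ M, T(0, m) = π(m), and for 1 ≤ j ≤ N-1, T(j, m) = max_{m' ∈ L_{j-1}} P(m', m) · T(j-1, m'). Then for every 0 ≤ j ≤ N-1 and every m ∈ M, T(j, m) equals the maximum of W_j(l_0, …, l_{j-1}, m) over all (l_0, …, l_{j-1}) ∈ L_0 × L_1 × … × L_{j-1}. -/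

import Mathlib

/-- The dynamic-programming function `T` of the context list decoding algorithm (CLDA):
`T(0, m) = π(m)` and, for `j ≥ 1`,
`T(j, m) = max_{m' ∈ L_{j-1}} P(m', m) · T(j-1, m')`. -/
def cldaT {M : Type*} (π : M → ℝ) (P : M → M → ℝ)
    (L : ℕ → Finset M) (hL : ∀ j, (L j).Nonempty) : ℕ → M → ℝ
  | 0, m => π m
  | j + 1, m => (L j).sup' (hL j) fun m' => P m' m * cldaT π P L hL j m'

/-- sup' over a pi-finset on `Fin (j+1)` splits as nested sup'. -/
lemma sup'_piFinset_snoc {M : Type*} (L : ℕ → Finset M) (hL : ∀ j, (L j).Nonempty)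
    (j : ℕ) (f : (Fin (j + 1) → M) → ℝ) :
    (Fintype.piFinset fun k : Fin (j + 1) => L k).sup'
      (Fintype.piFinset_nonempty.mpr fun k => hL k) f
    = (L j).sup' (hL j) (fun m' =>
        (Fintype.piFinset fun k : Fin j => L k).sup'
          (Fintype.piFinset_nonempty.mpr fun k => hL k)
          (fun l => f (Fin.snoc l m'))) := by
  apply le_antisymm
  · apply Finset.sup'_le
    intro l hl
    rw [Fintype.mem_piFinset] at hl
    have h1 : l (Fin.last j) ∈ L j := by simpa using hl (Fin.last j)
    have h2 : Fin.init l ∈ Fintype.piFinset fun k : Fin j => L k := by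
      rw [Fintype.mem_piFinset]; intro i; simpa [Fin.init] using hl i.castSucc
    calc f l = f (Fin.snoc (Fin.init l) (l (Fin.last j))) := by rw [Fin.snoc_init_self]
    _ ≤ _ := by
        exact le_trans
          (Finset.le_sup' (fun l' => f (Fin.snoc l' (l (Fin.last j)))) h2)
          (Finset.le_sup'
            (fun m' => (Fintype.piFinset fun k : Fin j => L k).sup'
              (Fintype.piFinset_nonempty.mpr fun k => hL k)
              (fun l => f (Fin.snoc l m'))) h1)
  · apply Finset.sup'_le
    intro m' hm'
    apply Finset.sup'_le
    intro l hl
    rw [Fintype.mem_piFinset] at hl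
    have : Fin.snoc l m' ∈ Fintype.piFinset fun k : Fin (j + 1) => L k := by
      rw [Fintype.mem_piFinset]
      intro i
      refine Fin.lastCases ?_ ?_ i
      · simpa using hm'
      · intro i; simpa using hl i
    exact Finset.le_sup' _ this


/-- Let `M` be a type, `N ≥ 1`, let `L_0, L_1, …` be finite nonempty
subsets of `M`, let `π : M → ℝ` and `P : M → M → ℝ` be nonnegative.  The weight of a
tuple `(l_0, …, l_j)` is `W_j(l) = π(l_0) · Π_{k=1}^{j} P(l_{k-1}, l_k)`.  Then for every
`0 ≤ j ≤ N - 1` and every `m ∈ M`, `T(j, m)` equals the maximum of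
`W_j(l_0, …, l_{j-1}, m)` over all `(l_0, …, l_{j-1}) ∈ L_0 × L_1 × … × L_{j-1}`. -/
theorem cldaT_eq_max_sentence_weight
    (M : Type*) (N : ℕ) (hN : 1 ≤ N)
    (L : ℕ → Finset M) (hL : ∀ j, (L j).Nonempty)
    (π : M → ℝ) (P : M → M → ℝ)
    (hπ0 : ∀ i, 0 ≤ π i) (hP0 : ∀ i j, 0 ≤ P i j)
    (j : ℕ) (hj : j ≤ N - 1) (m : M) :
    cldaT π P L hL j m
    = (Fintype.piFinset fun k : Fin j => L k).sup'
        (Fintype.piFinset_nonempty.mpr fun k => hL k)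
        (fun l =>
          let t : Fin (j + 1) → M := Fin.snoc l m
          π (t 0) * ∏ k : Fin j, P (t k.castSucc) (t k.succ)) := by
  clear hj hN
  induction j generalizing m with
  | zero =>
      simp only [cldaT]
      rw [eq_comm]
      have : ∀ l : Fin 0 → M,
          (let t : Fin 1 → M := Fin.snoc l m
           π (t 0) * ∏ k : Fin 0, P (t k.castSucc) (t k.succ)) = π m := by
        intro l
        simp [Fin.snoc, Fin.last]
      simp only [this]
      exact Finset.sup'_const _ _
  | succ j ih =>
      rw [sup'_piFinset_snoc L hL]
      show (L j).sup' (hL j) (fun m' => P m' m * cldaT π P L hL j m') = _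
      apply Finset.sup'_congr _ rfl
      intro m' hm'
      rw [ih m']
      rw [Finset.comp_sup'_eq_sup'_comp (g := fun x => P m' m * x)]
      · apply Finset.sup'_congr _ rfl
        intro l hl
        show P m' m * _ = _
        simp only []
        have e0 : (Fin.snoc (Fin.snoc l m' : Fin (j+1) → M) m : Fin (j+2) → M) 0
            = (Fin.snoc l m' : Fin (j+1) → M) 0 := by
          have : (0 : Fin (j+2)) = (Fin.castSucc (0 : Fin (j+1))) := rfl
          rw [this, Fin.snoc_castSucc]
        rw [Fin.prod_univ_castSucc (f := fun k : Fin (j+1) =>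
          P ((Fin.snoc (Fin.snoc l m') m : Fin (j+2) → M) k.castSucc)
            ((Fin.snoc (Fin.snoc l m') m : Fin (j+2) → M) k.succ))]
        simp only [e0]
        simp only [Fin.succ_castSucc, Fin.snoc_castSucc, Fin.succ_last, Fin.snoc_last]
        ring
      · intro x y
        exact mul_max_of_nonneg _ _ (hP0 m' m)
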